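/- Let X be an extended quasi-metric space and ℓ ∈ [0,∞). The map ℤ^{Adj(X,ℓ)} → MH^1_ℓ(X) sending m : Adj(X,ℓ) → ℤ to the cohomology class of the cochain ψ_m, defined on 1-simplices by ψ_m(x,y) = m(x,y) if (x,y) is an adjacent pair and ψ_m(x,y) = 0 otherwise, is an isomorphism of abelian groups. Moreover, under this isomorphism and the ring isomorphism MH^0_0(X) ≅ ℤ^X, the MH^0_0(X)-bimodule structure on MH^1_ℓ(X) given by the magnitude cohomology product corresponds to the ℤ^X-bimodule structure on ℤ^{Adj(X,ℓ)} given by (f·m·g)(x,y) = f(x)·m(x,y)·g(y). -/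

import Mathlib

/-! Core definitions: magnitude (co)homology of generalised metric spaces. -/

open scoped ENNReal NNReal Classical
noncomputable section

/-- A generalised metric space (extended pseudo-quasi-metric space):
a set with a distance in `[0,∞]` satisfying `d x x = 0` and the triangle
inequality, but not necessarily symmetry or separation. -/
structure GMS (X : Type*) where
  d : X → X → ℝ≥0∞
  d_self : ∀ x, d x x = 0
  d_triangle : ∀ x y z, d x z ≤ d x y + d y z

variable {X : Type*}

/-- An extended quasi-metric space: distinct points are at nonzero distance. -/
def GMS.Quasi (M : GMS X) : Prop := ∀ x y, M.d x y = 0 → x = y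

/-- Consecutive entries of the tuple are distinct, i.e. it is a simplex. -/
def SepTuple {k : ℕ} (x : Fin (k + 1) → X) : Prop :=
  ∀ i : Fin k, x i.castSucc ≠ x i.succ

/-- The length of a tuple: the sum of consecutive distances. -/
def GMS.len (M : GMS X) {k : ℕ} (x : Fin (k + 1) → X) : ℝ≥0∞ :=
  ∑ i : Fin k, M.d (x i.castSucc) (x i.succ)

/-- A `k`-simplex of length `ℓ` in the generalised metric space `M`. -/
structure MSimplex (M : GMS X) (k : ℕ) (ℓ : ℝ≥0) where
  pts : Fin (k + 1) → X
  sep : SepTuple pts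
  len_eq : M.len pts = (ℓ : ℝ≥0∞)

/-- The magnitude chain group `MC_{k,ℓ}`: the free abelian group on the
`k`-simplices of length `ℓ`. -/
abbrev MC (M : GMS X) (k : ℕ) (ℓ : ℝ≥0) := MSimplex M k ℓ →₀ ℤ

/-- The magnitude cochain group `MC^k_ℓ = Hom(MC_{k,ℓ}, ℤ)`, identified with
the group of all `ℤ`-valued functions on `k`-simplices of length `ℓ`. -/
abbrev MCo (M : GMS X) (k : ℕ) (ℓ : ℝ≥0) := MSimplex M k ℓ → ℤ

/-- Remove the `(j+1)`-st point (an inner point) from a tuple. -/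
def faceTuple {k : ℕ} (x : Fin (k + 2) → X) (j : Fin k) : Fin (k + 1) → X :=
  x ∘ Fin.succAbove ⟨j.val + 1, by have := j.isLt; omega⟩

/-- The condition under which the inner face `∂_{j+1}` of a simplex is a simplex
of the same length: the removed point lies on a geodesic between its
neighbours (and, redundantly in quasi-metric spaces, the face is again a
simplex of the same length). -/
def GMS.FaceOK (M : GMS X) {k : ℕ} {ℓ : ℝ≥0} (s : MSimplex M (k + 1) ℓ) (j : Fin k) : Prop :=
  M.d (s.pts ⟨j.val, by have := j.isLt; omega⟩) (s.pts ⟨j.val + 2, by have := j.isLt; omega⟩) =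
      M.d (s.pts ⟨j.val, by have := j.isLt; omega⟩) (s.pts ⟨j.val + 1, by have := j.isLt; omega⟩) +
      M.d (s.pts ⟨j.val + 1, by have := j.isLt; omega⟩) (s.pts ⟨j.val + 2, by have := j.isLt; omega⟩)
    ∧ SepTuple (faceTuple s.pts j) ∧ M.len (faceTuple s.pts j) = (ℓ : ℝ≥0∞)

/-- The inner face `∂_{j+1}` of a simplex, when defined. -/
def GMS.face (M : GMS X) {k : ℕ} {ℓ : ℝ≥0} (s : MSimplex M (k + 1) ℓ) (j : Fin k)
    (h : M.FaceOK s j) : MSimplex M k ℓ :=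
  ⟨faceTuple s.pts j, h.2.1, h.2.2⟩

/-- The magnitude coboundary `∂^* : MC^k_ℓ → MC^{k+1}_ℓ`, dual to the
differential `∂ = -∂_1 + ∂_2 - ⋯ + (-1)^k ∂_k`. -/
def MCoDelta (M : GMS X) (k : ℕ) (ℓ : ℝ≥0) : MCo M k ℓ →ₗ[ℤ] MCo M (k + 1) ℓ where
  toFun φ := fun s => ∑ j : Fin k, (-1 : ℤ) ^ (j.val + 1) *
      (if h : M.FaceOK s j then φ (M.face s j h) else 0)
  map_add' φ ψ := by
    funext s
    simp only [Pi.add_apply]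
    rw [← Finset.sum_add_distrib]
    refine Finset.sum_congr rfl fun j _ => ?_
    split <;> ring
  map_smul' z φ := by
    funext s
    simp only [Pi.smul_apply, smul_eq_mul, RingHom.id_apply]
    rw [Finset.mul_sum]
    refine Finset.sum_congr rfl fun j _ => ?_
    split <;> ring

/-- Magnitude cocycles in bidegree `(k, ℓ)`. -/
def MCocycle (M : GMS X) (k : ℕ) (ℓ : ℝ≥0) : Submodule ℤ (MCo M k ℓ) :=
  LinearMap.ker (MCoDelta M k ℓ)

/-- Magnitude coboundaries in bidegree `(k, ℓ)` (zero in degree `0`). -/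
def MCobound (M : GMS X) : (k : ℕ) → (ℓ : ℝ≥0) → Submodule ℤ (MCo M k ℓ)
  | 0, _ => ⊥
  | (k + 1), ℓ => LinearMap.range (MCoDelta M k ℓ)

/-- The magnitude cohomology group `MH^k_ℓ(X)`: cocycles modulo coboundaries. -/
abbrev MagCohomology (M : GMS X) (k : ℕ) (ℓ : ℝ≥0) :=
  MCocycle M k ℓ ⧸ (MCobound M k ℓ).comap (MCocycle M k ℓ).subtype

/-- The cohomology class of a cochain (zero if it is not a cocycle). -/
def cohClass (M : GMS X) {k : ℕ} {ℓ : ℝ≥0} (φ : MCo M k ℓ) : MagCohomology M k ℓ :=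
  if h : φ ∈ MCocycle M k ℓ then Submodule.Quotient.mk ⟨φ, h⟩ else 0

/-- A representative cocycle of a magnitude cohomology class. -/
def MHout (M : GMS X) {k : ℕ} {ℓ : ℝ≥0} (α : MagCohomology M k ℓ) : MCo M k ℓ :=
  ((Submodule.Quotient.mk_surjective _) α).choose.val

/-- The first `j+1` points of a `(j+k)`-simplex. -/
def frontT (j k : ℕ) (x : Fin (j + k + 1) → X) : Fin (j + 1) → X :=
  fun i => x ⟨i.val, by have := i.isLt; omega⟩

/-- The last `k+1` points of a `(j+k)`-simplex. -/
def backT (j k : ℕ) (x : Fin (j + k + 1) → X) : Fin (k + 1) → X :=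
  fun i => x ⟨j + i.val, by have := i.isLt; omega⟩

lemma SepTuple.front {j k : ℕ} {x : Fin (j + k + 1) → X} (h : SepTuple x) :
    SepTuple (frontT j k x) := by
  intro i
  have hi := i.isLt
  exact h ⟨i.val, by omega⟩

lemma SepTuple.back {j k : ℕ} {x : Fin (j + k + 1) → X} (h : SepTuple x) :
    SepTuple (backT j k x) := by
  intro i
  have hi := i.isLt
  exact h ⟨j + i.val, by omega⟩

/-- The product of magnitude cochains:
`(φ·ψ)(x_0,…,x_{j+k}) = φ(x_0,…,x_j) · ψ(x_j,…,x_{j+k})`,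
where a cochain of length-degree `ℓ` vanishes on simplices of other lengths. -/
def MCup (M : GMS X) {j k : ℕ} {ℓ m : ℝ≥0} (φ : MCo M j ℓ) (ψ : MCo M k m) :
    MCo M (j + k) (ℓ + m) :=
  fun s =>
    if h : M.len (frontT j k s.pts) = (ℓ : ℝ≥0∞) ∧ M.len (backT j k s.pts) = (m : ℝ≥0∞) then
      φ ⟨frontT j k s.pts, s.sep.front, h.1⟩ * ψ ⟨backT j k s.pts, s.sep.back, h.2⟩
    else 0

/-- The unit cochain `u ∈ MC^0_0`, with `u(x_0) = 1`. -/
def MCoUnit (M : GMS X) : MCo M 0 0 := fun _ => 1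

/-- Transport of magnitude cohomology classes along equalities of bidegrees. -/
def MHcast (M : GMS X) {k k' : ℕ} {ℓ ℓ' : ℝ≥0} (hk : k = k') (hl : ℓ = ℓ')
    (α : MagCohomology M k ℓ) : MagCohomology M k' ℓ' := hk ▸ hl ▸ α

/-- Transport of magnitude cochains along equalities of bidegrees. -/
def MCoCast (M : GMS X) {k k' : ℕ} {ℓ ℓ' : ℝ≥0} (hk : k = k') (hl : ℓ = ℓ')
    (φ : MCo M k ℓ) : MCo M k' ℓ' := hk ▸ hl ▸ φ

/-- The product on magnitude cohomology induced by the product of cochains. -/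
def MHmul (M : GMS X) {j k : ℕ} {ℓ m : ℝ≥0} (α : MagCohomology M j ℓ)
    (β : MagCohomology M k m) : MagCohomology M (j + k) (ℓ + m) :=
  cohClass M (MCup M (MHout M α) (MHout M β))

/-- The unit of the magnitude cohomology ring. -/
def MHone (M : GMS X) : MagCohomology M 0 0 := cohClass M (MCoUnit M)

/-- Two points are adjacent: their distance is nonzero and finite, and no
third point lies strictly between them. -/
def GMS.Adjacent (M : GMS X) (x y : X) : Prop :=
  M.d x y ≠ 0 ∧ M.d x y ≠ ∞ ∧ ∀ a, M.d x y = M.d x a + M.d a y → a = x ∨ a = y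

/-- An isomorphism of magnitude cohomology rings: a family of additive
isomorphisms respecting both gradings, the product, and the unit. -/
def MHRingIso {Y : Type*} (M : GMS X) (M' : GMS Y) : Prop :=
  ∃ e : ∀ (k : ℕ) (ℓ : ℝ≥0), MagCohomology M k ℓ ≃+ MagCohomology M' k ℓ,
    (e 0 0 (MHone M) = MHone M') ∧
    ∀ (j k : ℕ) (ℓ m : ℝ≥0) (α : MagCohomology M j ℓ) (β : MagCohomology M k m),
      e (j + k) (ℓ + m) (MHmul M α β) = MHmul M' (e j ℓ α) (e k m β)


/-- The map `ℤ^X → MH^0_0(X)`, `f ↦ [φ_f]` where `φ_f((x_0)) = f(x_0)`. -/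
def Phi0 (M : GMS X) (f : X → ℤ) : MagCohomology M 0 0 :=
  cohClass M (fun s : MSimplex M 0 0 => f (s.pts 0))

/-- `Adj(X, ℓ)`: ordered pairs of adjacent points at distance `ℓ`. -/
def AdjPairs (M : GMS X) (ℓ : ℝ≥0) : Type _ :=
  {p : X × X // M.Adjacent p.1 p.2 ∧ M.d p.1 p.2 = (ℓ : ℝ≥0∞)}

/-- The map `ℤ^{Adj(X,ℓ)} → MH^1_ℓ(X)`, `m ↦ [ψ_m]`, where `ψ_m(x,y) = m(x,y)`
for adjacent pairs `(x,y)` and `ψ_m(x,y) = 0` otherwise. -/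
def Psi1 (M : GMS X) (ℓ : ℝ≥0) (m : AdjPairs M ℓ → ℤ) : MagCohomology M 1 ℓ :=
  cohClass M (fun s : MSimplex M 1 ℓ =>
    if h : M.Adjacent (s.pts 0) (s.pts 1) ∧ M.d (s.pts 0) (s.pts 1) = (ℓ : ℝ≥0∞) then
      m ⟨(s.pts 0, s.pts 1), h⟩
    else 0)

section Helpers

variable (M : GMS X)

lemma msimplex_ext {k : ℕ} {ℓ : ℝ≥0} {s t : MSimplex M k ℓ} (h : s.pts = t.pts) : s = t := by
  cases s; cases t; simpa using h

lemma len_one (x : Fin 2 → X) : M.len x = M.d (x 0) (x 1) := by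
  simp [GMS.len, Fin.sum_univ_one]

lemma len_two (x : Fin 3 → X) : M.len x = M.d (x 0) (x 1) + M.d (x 1) (x 2) := by
  simp [GMS.len, Fin.sum_univ_two]

lemma d_one {ℓ : ℝ≥0} (s : MSimplex M 1 ℓ) : M.d (s.pts 0) (s.pts 1) = (ℓ : ℝ≥0∞) := by
  rw [← len_one]; exact s.len_eq

lemma sep_one {ℓ : ℝ≥0} (s : MSimplex M 1 ℓ) : s.pts 0 ≠ s.pts 1 := s.sep 0

lemma delta1_apply {ℓ : ℝ≥0} (φ : MCo M 1 ℓ) (t : MSimplex M 2 ℓ) :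
    MCoDelta M 1 ℓ φ t = -(if h : M.FaceOK t 0 then φ (M.face t 0 h) else 0) := by
  simp only [MCoDelta, LinearMap.coe_mk, AddHom.coe_mk, Fin.sum_univ_one]
  split <;> simp

lemma faceTuple_two (x : Fin 3 → X) : faceTuple x (0 : Fin 1) = ![x 0, x 2] := by
  funext i
  fin_cases i <;> simp [faceTuple, Fin.succAbove]

lemma faceOK_one {ℓ : ℝ≥0} (t : MSimplex M 2 ℓ) :
    M.FaceOK t 0 ↔
      (M.d (t.pts 0) (t.pts 2) = M.d (t.pts 0) (t.pts 1) + M.d (t.pts 1) (t.pts 2)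
        ∧ SepTuple (faceTuple t.pts 0) ∧ M.len (faceTuple t.pts 0) = (ℓ : ℝ≥0∞)) :=
  Iff.rfl

lemma cocycle_one_iff (hq : M.Quasi) {ℓ : ℝ≥0} (φ : MCo M 1 ℓ) :
    φ ∈ MCocycle M 1 ℓ ↔
      ∀ s : MSimplex M 1 ℓ, ¬ M.Adjacent (s.pts 0) (s.pts 1) → φ s = 0 := by
  constructor
  · intro h s hna
    have hd : M.d (s.pts 0) (s.pts 1) = (ℓ : ℝ≥0∞) := d_one M s
    have hne : s.pts 0 ≠ s.pts 1 := sep_one M s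
    have hd0 : M.d (s.pts 0) (s.pts 1) ≠ 0 := fun h0 => hne (hq _ _ h0)
    have hdtop : M.d (s.pts 0) (s.pts 1) ≠ ∞ := by rw [hd]; exact ENNReal.coe_ne_top
    rw [GMS.Adjacent] at hna
    push_neg at hna
    obtain ⟨a, ha, hax, hay⟩ := hna hd0 hdtop
    have hsep : SepTuple ![s.pts 0, a, s.pts 1] := by
      intro i
      fin_cases i
      · simpa using fun h' => hax h'.symm
      · simpa using hay

    have hlen : M.len ![s.pts 0, a, s.pts 1] = (ℓ : ℝ≥0∞) := by
      rw [len_two]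
      simp only [Matrix.cons_val_zero, Matrix.cons_val_one, Matrix.head_cons,
        Matrix.cons_val_two, Matrix.tail_cons]
      rw [← ha, hd]
    set t : MSimplex M 2 ℓ := ⟨![s.pts 0, a, s.pts 1], hsep, hlen⟩ with ht
    have hface : faceTuple t.pts (0 : Fin 1) = s.pts := by
      rw [faceTuple_two]
      funext i
      fin_cases i <;> simp [ht]
    have hOK : M.FaceOK t 0 := by
      rw [faceOK_one]
      refine ⟨?_, ?_, ?_⟩
      · show M.d (s.pts 0) (s.pts 1) = _
        simpa [ht] using ha
      · rw [hface]; exact s.sep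
      · rw [hface]; exact s.len_eq
    have h0 : MCoDelta M 1 ℓ φ t = 0 := by
      have := (LinearMap.mem_ker.mp h)
      rw [this]; rfl
    rw [delta1_apply, dif_pos hOK, neg_eq_zero] at h0
    rw [← h0]
    congr 1
    exact msimplex_ext M hface.symm
  · intro h
    refine LinearMap.mem_ker.mpr (funext fun t => ?_)
    show MCoDelta M 1 ℓ φ t = 0
    rw [delta1_apply]
    by_cases hOK : M.FaceOK t 0
    · rw [dif_pos hOK, neg_eq_zero]
      apply h
      have e0 : (M.face t 0 hOK).pts 0 = t.pts 0 := by
        show faceTuple t.pts 0 0 = _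
        rw [faceTuple_two]
        simp
      have e1 : (M.face t 0 hOK).pts 1 = t.pts 2 := by
        show faceTuple t.pts 0 1 = _
        rw [faceTuple_two]
        simp
      rw [e0, e1]
      intro hadj
      have h1 : M.d (t.pts 0) (t.pts 2)
          = M.d (t.pts 0) (t.pts 1) + M.d (t.pts 1) (t.pts 2) := ((faceOK_one M t).mp hOK).1
      rcases hadj.2.2 (t.pts 1) h1 with h' | h'
      · exact (t.sep 0) h'.symm
      · exact (t.sep 1) h'
    · rw [dif_neg hOK, neg_zero]

lemma cohClass_eq {k : ℕ} {ℓ : ℝ≥0} {φ : MCo M k ℓ} (hφ : φ ∈ MCocycle M k ℓ) :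
    cohClass M φ = Submodule.Quotient.mk ⟨φ, hφ⟩ := dif_pos hφ

lemma delta0_zero (ℓ : ℝ≥0) : MCoDelta M 0 ℓ = 0 := by
  refine LinearMap.ext fun φ => funext fun s => ?_
  simp [MCoDelta]

lemma cocycle0 (ℓ : ℝ≥0) (φ : MCo M 0 ℓ) : φ ∈ MCocycle M 0 ℓ := by
  rw [MCocycle, LinearMap.mem_ker, delta0_zero]
  rfl

lemma bound_bot0 (ℓ : ℝ≥0) : MCobound M 0 ℓ = ⊥ := rfl

lemma bound_bot1 (ℓ : ℝ≥0) : MCobound M 1 ℓ = ⊥ := by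
  show LinearMap.range (MCoDelta M 0 ℓ) = ⊥
  rw [delta0_zero, LinearMap.range_zero]

lemma MHout_cohClass {k : ℕ} {ℓ : ℝ≥0} (hb : MCobound M k ℓ = ⊥) {φ : MCo M k ℓ}
    (hφ : φ ∈ MCocycle M k ℓ) : MHout M (cohClass M φ) = φ := by
  have h := ((Submodule.Quotient.mk_surjective _) (cohClass M φ)).choose_spec
  have h2 := (Submodule.Quotient.eq _).mp (h.trans (cohClass_eq M hφ))
  have h3 := Submodule.mem_comap.mp h2
  have h3' := Submodule.mem_bot (R := ℤ) |>.mp (hb.le h3)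
  have h4 : MHout M (cohClass M φ) - φ = 0 := h3'
  rw [sub_eq_zero] at h4
  exact h4

lemma cohClass_injOn {k : ℕ} {ℓ : ℝ≥0} (hb : MCobound M k ℓ = ⊥) {φ ψ : MCo M k ℓ}
    (hφ : φ ∈ MCocycle M k ℓ) (hψ : ψ ∈ MCocycle M k ℓ)
    (h : cohClass M φ = cohClass M ψ) : φ = ψ := by
  rw [← MHout_cohClass M hb hφ, ← MHout_cohClass M hb hψ, h]

/-- The cochain underlying `Psi1`. -/
def psiC (ℓ : ℝ≥0) (m : AdjPairs M ℓ → ℤ) : MCo M 1 ℓ := fun s =>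
  if h : M.Adjacent (s.pts 0) (s.pts 1) ∧ M.d (s.pts 0) (s.pts 1) = (ℓ : ℝ≥0∞) then
    m ⟨(s.pts 0, s.pts 1), h⟩
  else 0

lemma Psi1_eq (ℓ : ℝ≥0) (m : AdjPairs M ℓ → ℤ) : Psi1 M ℓ m = cohClass M (psiC M ℓ m) := rfl

lemma psiC_cocycle (hq : M.Quasi) (ℓ : ℝ≥0) (m : AdjPairs M ℓ → ℤ) :
    psiC M ℓ m ∈ MCocycle M 1 ℓ := by
  rw [cocycle_one_iff M hq]
  intro s hna
  rw [psiC, dif_neg (fun h => hna h.1)]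

/-- The 1-simplex attached to an adjacent pair. -/
def pSimp {ℓ : ℝ≥0} (p : AdjPairs M ℓ) : MSimplex M 1 ℓ where
  pts := ![p.val.1, p.val.2]
  sep := by
    intro i
    fin_cases i
    simpa using fun h => p.2.1.1 (by rw [h]; exact M.d_self _)
  len_eq := by
    rw [len_one]
    simpa using p.2.2

lemma psiC_pSimp {ℓ : ℝ≥0} (m : AdjPairs M ℓ → ℤ) (p : AdjPairs M ℓ) :
    psiC M ℓ m (pSimp M p) = m p := by
  exact dif_pos p.2

lemma psiC_add (ℓ : ℝ≥0) (m m' : AdjPairs M ℓ → ℤ) :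
    psiC M ℓ (m + m') = psiC M ℓ m + psiC M ℓ m' := by
  funext s
  simp only [psiC, Pi.add_apply]
  split
  · rfl
  · norm_num

lemma cohClass_add {k : ℕ} {ℓ : ℝ≥0} {φ ψ : MCo M k ℓ} (hφ : φ ∈ MCocycle M k ℓ)
    (hψ : ψ ∈ MCocycle M k ℓ) : cohClass M (φ + ψ) = cohClass M φ + cohClass M ψ := by
  rw [cohClass_eq M (add_mem hφ hψ), cohClass_eq M hφ, cohClass_eq M hψ,
    ← Submodule.Quotient.mk_add]
  rfl

/-- The cochain underlying `Phi0`. -/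
def phiC (f : X → ℤ) : MCo M 0 0 := fun s => f (s.pts 0)

lemma Phi0_eq (f : X → ℤ) : Phi0 M f = cohClass M (phiC M f) := rfl

lemma MHout_Phi0 (f : X → ℤ) : MHout M (Phi0 M f) = phiC M f :=
  MHout_cohClass M (bound_bot0 M 0) (cocycle0 M 0 _)

/-- Transport of a simplex along an equality of lengths. -/
def SCast {k : ℕ} {ℓ ℓ' : ℝ≥0} (hl : ℓ = ℓ') (s : MSimplex M k ℓ) : MSimplex M k ℓ' :=
  ⟨s.pts, s.sep, hl ▸ s.len_eq⟩

lemma MHcast_cohClass {k k' : ℕ} {ℓ ℓ' : ℝ≥0} (hk : k = k') (hl : ℓ = ℓ') (φ : MCo M k ℓ) :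
    MHcast M hk hl (cohClass M φ) = cohClass M (MCoCast M hk hl φ) := by
  subst hk; subst hl; rfl

lemma MCoCast_apply' {ℓ ℓ' : ℝ≥0} (hk : (1 : ℕ) = 0 + 1 + 0) (hl : ℓ = ℓ') (φ : MCo M 1 ℓ)
    (s : MSimplex M (0 + 1 + 0) ℓ') : MCoCast M hk hl φ s = φ (SCast M hl.symm s) := by
  subst hl; rfl

lemma cup01_eq (f : X → ℤ) {ℓ : ℝ≥0} (m : AdjPairs M ℓ → ℤ) (s : MSimplex M (0 + 1) (0 + ℓ)) :
    MCup M (phiC M f) (psiC M ℓ m) s =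
      if h : M.Adjacent (s.pts 0) (s.pts 1) ∧ M.d (s.pts 0) (s.pts 1) = (ℓ : ℝ≥0∞) then
        f (s.pts 0) * m ⟨(s.pts 0, s.pts 1), h⟩
      else 0 := by
  have hfront : M.len (frontT 0 1 s.pts) = ((0 : ℝ≥0) : ℝ≥0∞) := by simp [GMS.len]
  have hback : M.len (backT 0 1 s.pts) = (ℓ : ℝ≥0∞) := by
    have h1 : M.d (s.pts 0) (s.pts 1) = ((0 + ℓ : ℝ≥0) : ℝ≥0∞) := d_one M s
    have h2 : ((0 + ℓ : ℝ≥0) : ℝ≥0∞) = (ℓ : ℝ≥0∞) := by norm_num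
    rw [len_one]
    exact h1.trans h2
  simp only [MCup]
  rw [dif_pos ⟨hfront, hback⟩]
  by_cases h : M.Adjacent (s.pts 0) (s.pts 1) ∧ M.d (s.pts 0) (s.pts 1) = (ℓ : ℝ≥0∞)
  · rw [dif_pos h]
    exact congrArg (f (s.pts 0) * ·) (dif_pos h)
  · rw [dif_neg h]
    exact (congrArg (f (s.pts 0) * ·) (dif_neg h)).trans (mul_zero _)

lemma cup10_eq {ℓ' : ℝ≥0} (χ : MCo M 1 ℓ') (g : X → ℤ) (s : MSimplex M (1 + 0) (ℓ' + 0)) :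
    MCup M χ (phiC M g) s = χ (SCast M (add_zero ℓ') s) * g (s.pts 1) := by
  have hback : M.len (backT 1 0 s.pts) = ((0 : ℝ≥0) : ℝ≥0∞) := by simp [GMS.len]
  have hfront : M.len (frontT 1 0 s.pts) = (ℓ' : ℝ≥0∞) := by
    have h1 : M.d (s.pts 0) (s.pts 1) = ((ℓ' + 0 : ℝ≥0) : ℝ≥0∞) := d_one M s
    have h2 : ((ℓ' + 0 : ℝ≥0) : ℝ≥0∞) = (ℓ' : ℝ≥0∞) := by norm_num
    rw [len_one]
    exact h1.trans h2
  exact dif_pos ⟨hfront, hback⟩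

end Helpers

/-- `m ↦ [ψ_m]` is an isomorphism of abelian groups `ℤ^{Adj(X,ℓ)} ≅ MH^1_ℓ(X)`,
and it matches the `MH^0_0(X)`-bimodule structure of `MH^1_ℓ(X)` with the
`ℤ^X`-bimodule structure `(f·m·g)(x,y) = f(x)·m(x,y)·g(y)` on `ℤ^{Adj(X,ℓ)}`
under the ring isomorphism `ℤ^X ≅ MH^0_0(X)`. -/
theorem mh_one_bimodule (M : GMS X) (hq : M.Quasi) (ℓ : ℝ≥0) :
    Function.Bijective (Psi1 M ℓ) ∧
    (∀ m m' : AdjPairs M ℓ → ℤ, Psi1 M ℓ (m + m') = Psi1 M ℓ m + Psi1 M ℓ m') ∧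
    (∀ (f g : X → ℤ) (m : AdjPairs M ℓ → ℤ),
      MHmul M (MHmul M (Phi0 M f) (Psi1 M ℓ m)) (Phi0 M g) =
        MHcast M (by norm_num) (by norm_num)
          (Psi1 M ℓ (fun p => f p.val.1 * m p * g p.val.2))) := by
  have hb1 : MCobound M 1 ℓ = ⊥ := bound_bot1 M ℓ
  refine ⟨⟨?_, ?_⟩, ?_, ?_⟩
  · -- injectivity
    intro m m' h
    rw [Psi1_eq, Psi1_eq] at h
    have he := cohClass_injOn M hb1 (psiC_cocycle M hq ℓ m) (psiC_cocycle M hq ℓ m') h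
    funext p
    have h2 := congrFun he (pSimp M p)
    rwa [psiC_pSimp, psiC_pSimp] at h2
  · -- surjectivity
    intro α
    obtain ⟨⟨φ, hφ⟩, hmk⟩ := Submodule.Quotient.mk_surjective _ α
    refine ⟨fun p => φ (pSimp M p), ?_⟩
    have hpsi : psiC M ℓ (fun p => φ (pSimp M p)) = φ := by
      funext s
      by_cases h : M.Adjacent (s.pts 0) (s.pts 1)
      · have hc : M.Adjacent (s.pts 0) (s.pts 1) ∧ M.d (s.pts 0) (s.pts 1) = (ℓ : ℝ≥0∞) :=
          ⟨h, d_one M s⟩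
        rw [psiC, dif_pos hc]
        refine congrArg φ (msimplex_ext M ?_)
        funext i
        fin_cases i <;> rfl
      · rw [psiC, dif_neg (fun hc => h hc.1), (cocycle_one_iff M hq φ).mp hφ s h]
    rw [Psi1_eq, hpsi, cohClass_eq M hφ, hmk]
  · -- additivity
    intro m m'
    rw [Psi1_eq, Psi1_eq, Psi1_eq, psiC_add,
      cohClass_add M (psiC_cocycle M hq ℓ m) (psiC_cocycle M hq ℓ m')]
  · -- bimodule structure
    intro f g m
    have hχcoc : MCup M (phiC M f) (psiC M ℓ m) ∈ MCocycle M (0 + 1) (0 + ℓ) := by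
      refine (cocycle_one_iff M hq (ℓ := 0 + ℓ) (MCup M (phiC M f) (psiC M ℓ m))).mpr ?_
      intro s hna
      rw [cup01_eq M f m s, dif_neg (fun hc => hna hc.1)]
    have e1 : MHmul M (Phi0 M f) (Psi1 M ℓ m)
        = cohClass M (MCup M (phiC M f) (psiC M ℓ m)) := by
      show cohClass M (MCup M (MHout M (Phi0 M f)) (MHout M (Psi1 M ℓ m))) = _
      rw [MHout_Phi0, Psi1_eq, MHout_cohClass M hb1 (psiC_cocycle M hq ℓ m)]
    have e2 : MHmul M (MHmul M (Phi0 M f) (Psi1 M ℓ m)) (Phi0 M g)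
        = cohClass M (MCup M (MCup M (phiC M f) (psiC M ℓ m)) (phiC M g)) := by
      show cohClass M (MCup M (MHout M (MHmul M (Phi0 M f) (Psi1 M ℓ m)))
        (MHout M (Phi0 M g))) = _
      rw [MHout_Phi0, e1, MHout_cohClass M (bound_bot1 M (0 + ℓ)) hχcoc]
    rw [e2, Psi1_eq, MHcast_cohClass]
    refine congrArg (cohClass M) (funext fun s => ?_)
    by_cases h : M.Adjacent (s.pts 0) (s.pts 1) ∧ M.d (s.pts 0) (s.pts 1) = (ℓ : ℝ≥0∞)
    · calc MCup M (MCup M (phiC M f) (psiC M ℓ m)) (phiC M g) s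
          = MCup M (phiC M f) (psiC M ℓ m) (SCast M (add_zero (0 + ℓ)) s) * g (s.pts 1) :=
            cup10_eq M (MCup M (phiC M f) (psiC M ℓ m)) g s
        _ = f (s.pts 0) * m ⟨(s.pts 0, s.pts 1), h⟩ * g (s.pts 1) := by
            refine congrArg (· * g (s.pts 1)) ?_
            exact (cup01_eq M f m (SCast M (add_zero (0 + ℓ)) s)).trans (dif_pos h)
        _ = psiC M ℓ (fun p => f p.val.1 * m p * g p.val.2)
              (SCast M (show ℓ = 0 + ℓ + 0 by norm_num).symm s) := by
            simp only [psiC, SCast]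
            exact (dif_pos (t := fun h' => f (s.pts 0) * m ⟨(s.pts 0, s.pts 1), h'⟩ * g (s.pts 1)) (e := fun _ => (0 : ℤ)) h).symm
        _ = MCoCast M (by norm_num) (by norm_num)
              (psiC M ℓ (fun p => f p.val.1 * m p * g p.val.2)) s :=
            (MCoCast_apply' M _ _ _ s).symm
    · calc MCup M (MCup M (phiC M f) (psiC M ℓ m)) (phiC M g) s
          = MCup M (phiC M f) (psiC M ℓ m) (SCast M (add_zero (0 + ℓ)) s) * g (s.pts 1) :=
            cup10_eq M (MCup M (phiC M f) (psiC M ℓ m)) g s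
        _ = 0 := by
            refine mul_eq_zero_of_left ?_ _
            exact (cup01_eq M f m (SCast M (add_zero (0 + ℓ)) s)).trans (dif_neg h)
        _ = psiC M ℓ (fun p => f p.val.1 * m p * g p.val.2)
              (SCast M (show ℓ = 0 + ℓ + 0 by norm_num).symm s) := by
            simp only [psiC, SCast]
            exact (dif_neg (t := fun h' => f (s.pts 0) * m ⟨(s.pts 0, s.pts 1), h'⟩ * g (s.pts 1)) (e := fun _ => (0 : ℤ)) h).symm
        _ = MCoCast M (by norm_num) (by norm_num)
              (psiC M ℓ (fun p => f p.val.1 * m p * g p.val.2)) s :=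
            (MCoCast_apply' M _ _ _ s).symm

end
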